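/- Let f : {0,1}^n → {0,1}^n be a Boolean network whose asynchronous graph is acyclic, and suppose f has r fixed points (r ≥ 1 follows from acyclicity). Then there exists a word of length at most 2^n - r that fixes f. -/

import Mathlib

/-- One asynchronous update step: replace coordinate `i` of `x` by `f x i`. -/
def updateStep {n : ℕ} (f : (Fin n → Bool) → (Fin n → Bool)) (x : Fin n → Bool)
    (i : Fin n) : Fin n → Bool :=
  Function.update x i (f x i)

/-- Action of a word on a state. -/
def applyWord {n : ℕ} (f : (Fin n → Bool) → (Fin n → Bool)) :
    List (Fin n) → (Fin n → Bool) → (Fin n → Bool)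
  | [], x => x
  | i :: w, x => applyWord f w (updateStep f x i)

/-- A word `w` fixes `f` if applying it to any state yields a fixed point of `f`. -/
def Fixes {n : ℕ} (f : (Fin n → Bool) → (Fin n → Bool)) (w : List (Fin n)) : Prop :=
  ∀ x, f (applyWord f w x) = applyWord f w x

/-- Arc of the asynchronous graph. -/
def AsyncArc {n : ℕ} (f : (Fin n → Bool) → (Fin n → Bool))
    (x y : Fin n → Bool) : Prop :=
  ∃ i : Fin n, f x i ≠ x i ∧ y = Function.update x i (f x i)

/-- `w` is induced by a path of the `n`-cube. -/
def IsPathWord (n : ℕ) (w : List (Fin n)) : Prop :=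
  ∃ xs : List (Fin n → Bool), xs.Nodup ∧ xs.length = w.length + 1 ∧
    ∀ k (hk : k < w.length),
      xs.getD (k + 1) default =
        Function.update (xs.getD k default) (w.get ⟨k, hk⟩)
          (!(xs.getD k default (w.get ⟨k, hk⟩)))

/-- `W` contains every `n`-path-word as a subword. -/
def PathUniversal (n : ℕ) (W : List (Fin n)) : Prop :=
  ∀ w : List (Fin n), IsPathWord n w → w.Sublist W

/-- A coordinate where a non-fixed state disagrees with its image. -/
noncomputable def pickIdx {n : ℕ} (f : (Fin n → Bool) → (Fin n → Bool))
    (a : Fin n → Bool) (h : f a ≠ a) : Fin n :=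
  (Function.ne_iff.mp h).choose

lemma pickIdx_spec {n : ℕ} (f : (Fin n → Bool) → (Fin n → Bool))
    (a : Fin n → Bool) (h : f a ≠ a) :
    f a (pickIdx f a h) ≠ a (pickIdx f a h) :=
  (Function.ne_iff.mp h).choose_spec

/-- The word obtained from a list of states: one letter per non-fixed state. -/
noncomputable def wordOf {n : ℕ} (f : (Fin n → Bool) → (Fin n → Bool))
    (L : List (Fin n → Bool)) : List (Fin n) :=
  L.filterMap (fun a => if h : f a = a then none else some (pickIdx f a h))

lemma applyWord_fixed {n : ℕ} (f : (Fin n → Bool) → (Fin n → Bool))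
    (y : Fin n → Bool) (hy : f y = y) (w : List (Fin n)) : applyWord f w y = y := by
  induction w with
  | nil => rfl
  | cons i w ih =>
    show applyWord f w (updateStep f y i) = y
    have : updateStep f y i = y := by
      simp [updateStep, congrFun hy i, Function.update_eq_self]
    rw [this, ih]

lemma main_fix {n : ℕ} (f : (Fin n → Bool) → (Fin n → Bool))
    (s : (Fin n → Bool) → (Fin n → Bool) → Prop)
    (hrefl : ∀ x, s x x) (htrans : ∀ {x y z}, s x y → s y z → s x z)
    (hanti : ∀ {x y}, s x y → s y x → x = y)
    (harc : ∀ {x y}, AsyncArc f x y → s x y) :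
    ∀ (L : List (Fin n → Bool)) (y), L.Pairwise s → L.Nodup →
      (∀ z, s y z → z ∈ L) →
      f (applyWord f (wordOf f L) y) = applyWord f (wordOf f L) y := by
  intro L
  induction L with
  | nil => intro y _ _ H; exact absurd (H y (hrefl y)) List.not_mem_nil
  | cons a L ih =>
    intro y hsorted hnodup H
    by_cases hy : f y = y
    · rw [applyWord_fixed f y hy]; exact hy
    have hmemy : y ∈ a :: L := H y (hrefl y)
    obtain ⟨hal, hsL⟩ := List.pairwise_cons.mp hsorted
    obtain ⟨hanl, hndL⟩ := List.nodup_cons.mp hnodup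
    by_cases hfa : f a = a
    · have hw : wordOf f (a :: L) = wordOf f L := by simp [wordOf, hfa]
      rw [hw]
      refine ih y hsL hndL ?_
      intro z hz
      rcases List.mem_cons.mp (H z hz) with h | h
      · subst h
        have hya : y ≠ z := fun h => hy (by rw [h]; exact hfa)
        have hyL : y ∈ L := (List.mem_cons.mp hmemy).resolve_left hya
        exact absurd (hanti hz (hal y hyL)) hya
      · exact h
    · have hw : wordOf f (a :: L) = pickIdx f a hfa :: wordOf f L := by
        simp [wordOf, hfa]
      rw [hw]
      show f (applyWord f (wordOf f L) (updateStep f y (pickIdx f a hfa))) = _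
      set i := pickIdx f a hfa with hi
      set y' := updateStep f y i with hy'def
      have hyy' : s y y' := by
        by_cases hc : f y i = y i
        · have : y' = y := by
            rw [hy'def]; simp [updateStep, hc, Function.update_eq_self]
          rw [this]; exact hrefl y
        · exact harc ⟨i, hc, rfl⟩
      refine ih y' hsL hndL ?_
      intro z hz
      rcases List.mem_cons.mp (H z (htrans hyy' hz)) with h | h
      · exfalso
        subst h
        by_cases hya : y = z
        · subst hya
          have hne : y' ≠ y := by
            intro he
            have h2 := congrFun he i
            rw [hy'def] at h2
            simp [updateStep] at h2
            exact pickIdx_spec f y hfa h2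
          exact hne (hanti hz hyy')
        · have hyL : y ∈ L := (List.mem_cons.mp hmemy).resolve_left hya
          exact hya (hanti (htrans hyy' hz) (hal y hyL))
      · exact h

lemma wordOf_length {n : ℕ} (f : (Fin n → Bool) → (Fin n → Bool))
    (L : List (Fin n → Bool)) :
    (wordOf f L).length = (L.filter (fun a => !decide (f a = a))).length := by
  induction L with
  | nil => rfl
  | cons a L ih =>
    by_cases hfa : f a = a
    · simpa [wordOf, hfa, List.filter_cons] using ih
    · simpa [wordOf, hfa, List.filter_cons] using ih

/-- if the asynchronous graph of `f` is acyclic and `f` has `r`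
fixed points, then some word of length at most `2^n - r` fixes `f`. -/
theorem acyclic_fixing_word_of_length (n : ℕ) (f : (Fin n → Bool) → (Fin n → Bool))
    (hacyc : ∀ x, ¬ Relation.TransGen (AsyncArc f) x x)
    (r : ℕ) (hr : r = (Finset.univ.filter (fun x : Fin n → Bool => f x = x)).card) :
    ∃ w : List (Fin n), w.length ≤ 2 ^ n - r ∧ Fixes f w := by
  classical
  set r0 : (Fin n → Bool) → (Fin n → Bool) → Prop :=
    Relation.ReflTransGen (AsyncArc f) with hr0
  have hanti0 : ∀ x y, r0 x y → r0 y x → x = y := by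
    intro x y hxy hyx
    by_contra hne
    rcases (Relation.reflTransGen_iff_eq_or_transGen.mp hxy) with h | h
    · exact hne h.symm
    rcases (Relation.reflTransGen_iff_eq_or_transGen.mp hyx) with h2 | h2
    · exact hne h2
    exact hacyc x (h.trans h2)
  letI : IsPartialOrder (Fin n → Bool) r0 :=
    { refl := fun x => Relation.ReflTransGen.refl
      trans := fun a b c => Relation.ReflTransGen.trans
      antisymm := hanti0 }
  obtain ⟨s, hlin, hrs⟩ := extend_partialOrder r0
  haveI := hlin
  letI : DecidableRel s := fun a b => Classical.dec _
  set L := Finset.univ.sort s with hL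
  refine ⟨wordOf f L, ?_, ?_⟩
  · rw [wordOf_length]
    have hnd : L.Nodup := Finset.sort_nodup Finset.univ s
    have h1 : (L.filter (fun a => !decide (f a = a))).length
        = (Finset.univ.filter (fun x : Fin n → Bool => ¬ f x = x)).card := by
      rw [← List.toFinset_card_of_nodup (hnd.filter _)]
      congr 1
      ext z
      simp [hL, Finset.mem_sort]
    rw [h1]
    have h2 := Finset.card_filter_add_card_filter_not
      (s := (Finset.univ : Finset (Fin n → Bool)))
      (p := fun x => f x = x)
    have h3 : Fintype.card (Fin n → Bool) = 2 ^ n := by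
      simp [Fintype.card_fun]
    rw [Finset.card_univ, h3] at h2
    omega
  · intro x
    refine main_fix f s (fun x => refl_of s x)
      (fun h1 h2 => IsTrans.trans _ _ _ h1 h2)
      (fun h1 h2 => antisymm_of s h1 h2)
      (fun {x y} h => hrs x y (Relation.ReflTransGen.single h))
      L x (Finset.pairwise_sort _ s) (Finset.sort_nodup _ s) ?_
    intro z _
    simp [hL, Finset.mem_sort]
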